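/- Let j ∈ ℕ, N = 2j+1, and t : M³ → ℂ, with φ its discrete Fourier presentation. Then φ_{abc} is real for every (a,b,c) ∈ ℤ³ if and only if for all (m₁,m₂,m₃) ∈ M³: conj(t(m₁,m₂,m₃)) = (−1)^{3j−|m₁|−|m₂|−|m₃|}·t(−m₁,−m₂,−m₃). -/

import Mathlib

open Finset

/-- The discrete Fourier presentation of `t : M³ → ℂ`, where `M = {-j, …, j}`:
`φ_{abc} = Σ_{m∈M³} t(m₁,m₂,m₃) i^{3j-|m₁|-|m₂|-|m₃|} exp(-(2πi/N)(a m₁ + b m₂ + c m₃))`. -/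
noncomputable def fourierPresentation (j N : ℕ) (t : ℤ → ℤ → ℤ → ℂ) :
    ℤ → ℤ → ℤ → ℂ :=
  fun a b c =>
    ∑ m1 ∈ Finset.Icc (-(j : ℤ)) (j : ℤ), ∑ m2 ∈ Finset.Icc (-(j : ℤ)) (j : ℤ),
      ∑ m3 ∈ Finset.Icc (-(j : ℤ)) (j : ℤ),
        t m1 m2 m3 * Complex.I ^ (3 * (j : ℤ) - |m1| - |m2| - |m3|) *
          Complex.exp (-(2 * (Real.pi : ℂ) * Complex.I / (N : ℂ)) *
            ((a : ℂ) * (m1 : ℂ) + (b : ℂ) * (m2 : ℂ) + (c : ℂ) * (m3 : ℂ)))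

/-- The elementary character `exp((2πi/N) a m)`. -/
noncomputable def fpE (N : ℕ) (a m : ℤ) : ℂ :=
  Complex.exp (2 * (Real.pi : ℂ) * Complex.I / (N : ℂ) * ((a : ℂ) * (m : ℂ)))

lemma fpE_add (N : ℕ) (a m m' : ℤ) : fpE N a m * fpE N a m' = fpE N a (m + m') := by
  rw [fpE, fpE, fpE, ← Complex.exp_add]
  congr 1
  push_cast
  ring

lemma fpE_sum (j N : ℕ) (hN : N = 2 * j + 1) (m m' : ℤ)
    (hm : m ∈ Finset.Icc (-(j:ℤ)) j) (hm' : m' ∈ Finset.Icc (-(j:ℤ)) j) :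
    ∑ a ∈ Finset.range N, fpE N a (m - m') = if m = m' then (N : ℂ) else 0 := by
  have hNn : N ≠ 0 := by omega
  have hN0 : (N : ℂ) ≠ 0 := Nat.cast_ne_zero.mpr hNn
  by_cases h : m = m'
  · subst h
    simp [fpE]
  · simp only [if_neg h]
    set d : ℤ := m - m' with hd
    have hd0 : d ≠ 0 := sub_ne_zero.mpr h
    have hdN : |d| < (N : ℤ) := by
      simp only [Finset.mem_Icc] at hm hm'
      rw [abs_lt]
      push_cast [hN]
      omega
    set z : ℂ := Complex.exp (2 * (Real.pi : ℂ) * Complex.I * (d : ℂ) / N) with hz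
    have hterm : ∀ a ∈ Finset.range N, fpE N a d = z ^ a := by
      intro a _
      rw [fpE, hz, ← Complex.exp_nat_mul]
      congr 1
      field_simp
      push_cast
      ring
    have hzN : z ^ N = 1 := by
      rw [hz, ← Complex.exp_nat_mul]
      have : (N : ℂ) * (2 * (Real.pi : ℂ) * Complex.I * (d : ℂ) / N) =
          (d : ℂ) * (2 * (Real.pi : ℂ) * Complex.I) := by
        field_simp
      rw [this, Complex.exp_int_mul_two_pi_mul_I]
    have hπ : (2 * (Real.pi : ℂ) * Complex.I) ≠ 0 := by
      simp [Real.pi_ne_zero, Complex.I_ne_zero]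
    have hz1 : z ≠ 1 := by
      intro hone
      rw [hz, Complex.exp_eq_one_iff] at hone
      obtain ⟨n, hn⟩ := hone
      have hdn : (d : ℂ) = (n : ℂ) * (N : ℂ) := by
        have h2 : (2 * (Real.pi : ℂ) * Complex.I) * (d : ℂ) =
            (2 * (Real.pi : ℂ) * Complex.I) * ((n : ℂ) * (N : ℂ)) := by
          field_simp at hn
          linear_combination (2 * (Real.pi : ℂ) * Complex.I) * hn
        exact mul_left_cancel₀ hπ h2
      have hdn' : d = n * N := by exact_mod_cast hdn
      have hn0 : n ≠ 0 := by
        rintro rfl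
        simp at hdn'
        omega
      have h1 : (1 : ℤ) ≤ |n| := Int.one_le_abs hn0
      have hgeN : (N : ℤ) ≤ |d| := by
        rw [hdn', abs_mul]
        nlinarith [abs_nonneg n, Int.abs_natCast N, Int.natCast_nonneg N]
      omega
    have h2 : ∑ a ∈ Finset.range N, fpE N a d = ∑ a ∈ Finset.range N, z ^ a :=
      Finset.sum_congr rfl hterm
    rw [h2, geom_sum_eq hz1, hzN]
    simp

lemma fpInv (j N : ℕ) (hN : N = 2 * j + 1) (F : ℤ → ℂ)
    (h : ∀ a : ℤ, ∑ m ∈ Finset.Icc (-(j:ℤ)) j, F m * fpE N a m = 0) :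
    ∀ m ∈ Finset.Icc (-(j:ℤ)) j, F m = 0 := by
  intro m₀ hm₀
  have hNn : N ≠ 0 := by omega
  have hN0 : (N : ℂ) ≠ 0 := Nat.cast_ne_zero.mpr hNn
  have key : ∑ a ∈ Finset.range N,
      (∑ m ∈ Finset.Icc (-(j:ℤ)) j, F m * fpE N a m) * fpE N a (-m₀) = (N : ℂ) * F m₀ := by
    have step1 : ∀ a : ℕ,
        (∑ m ∈ Finset.Icc (-(j:ℤ)) j, F m * fpE N a m) * fpE N a (-m₀)
          = ∑ m ∈ Finset.Icc (-(j:ℤ)) j, F m * fpE N a (m - m₀) := by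
      intro a
      rw [Finset.sum_mul]
      refine Finset.sum_congr rfl fun m _ => ?_
      rw [mul_assoc, fpE_add]
      ring_nf
    calc ∑ a ∈ Finset.range N,
        (∑ m ∈ Finset.Icc (-(j:ℤ)) j, F m * fpE N a m) * fpE N a (-m₀)
        = ∑ a ∈ Finset.range N, ∑ m ∈ Finset.Icc (-(j:ℤ)) j, F m * fpE N a (m - m₀) :=
          Finset.sum_congr rfl fun a _ => step1 a
      _ = ∑ m ∈ Finset.Icc (-(j:ℤ)) j, ∑ a ∈ Finset.range N, F m * fpE N a (m - m₀) :=
          Finset.sum_comm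
      _ = ∑ m ∈ Finset.Icc (-(j:ℤ)) j, F m * ∑ a ∈ Finset.range N, fpE N a (m - m₀) := by
          refine Finset.sum_congr rfl fun m _ => ?_
          rw [Finset.mul_sum]
      _ = ∑ m ∈ Finset.Icc (-(j:ℤ)) j, F m * (if m = m₀ then (N : ℂ) else 0) := by
          refine Finset.sum_congr rfl fun m hm => ?_
          rw [fpE_sum j N hN m m₀ hm hm₀]
      _ = (N : ℂ) * F m₀ := by
          simp only [mul_ite, mul_zero]
          rw [Finset.sum_ite_eq' _ m₀ (fun m => F m * (N : ℂ))]
          simp [hm₀, mul_comm]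
  have hzero : ∑ a ∈ Finset.range N,
      (∑ m ∈ Finset.Icc (-(j:ℤ)) j, F m * fpE N a m) * fpE N a (-m₀) = 0 := by
    refine Finset.sum_eq_zero fun a _ => ?_
    rw [h a, zero_mul]
  rw [hzero] at key
  exact (mul_eq_zero.mp key.symm).resolve_left hN0

lemma sum_neg_Icc (j : ℕ) (f : ℤ → ℂ) :
    ∑ m ∈ Finset.Icc (-(j:ℤ)) (j:ℤ), f m = ∑ m ∈ Finset.Icc (-(j:ℤ)) (j:ℤ), f (-m) := by
  refine Finset.sum_nbij' (fun m => -m) (fun m => -m) ?_ ?_ ?_ ?_ ?_ <;>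
    intro a ha <;> simp_all [Finset.mem_Icc] <;> omega

/-- The "reality defect" of `t`. -/
noncomputable def fpG (j : ℕ) (t : ℤ → ℤ → ℤ → ℂ) (m1 m2 m3 : ℤ) : ℂ :=
  ((starRingEnd ℂ) (t m1 m2 m3) * (-1 : ℂ) ^ (3 * (j : ℤ) - |m1| - |m2| - |m3|)
      - t (-m1) (-m2) (-m3)) * Complex.I ^ (3 * (j : ℤ) - |m1| - |m2| - |m3|)

lemma phi_reindex (j N : ℕ) (t : ℤ → ℤ → ℤ → ℂ) (a b c : ℤ) :
    fourierPresentation j N t a b c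
      = ∑ m1 ∈ Finset.Icc (-(j : ℤ)) (j : ℤ), ∑ m2 ∈ Finset.Icc (-(j : ℤ)) (j : ℤ),
          ∑ m3 ∈ Finset.Icc (-(j : ℤ)) (j : ℤ),
            t (-m1) (-m2) (-m3) * Complex.I ^ (3 * (j : ℤ) - |m1| - |m2| - |m3|) *
              (fpE N a m1 * fpE N b m2 * fpE N c m3) := by
  rw [fourierPresentation]
  refine (sum_neg_Icc j _).trans ?_
  refine Finset.sum_congr rfl fun m1 _ => ?_
  refine (sum_neg_Icc j _).trans ?_
  refine Finset.sum_congr rfl fun m2 _ => ?_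
  refine (sum_neg_Icc j _).trans ?_
  refine Finset.sum_congr rfl fun m3 _ => ?_
  simp only [abs_neg]
  congr 1
  rw [fpE, fpE, fpE, ← Complex.exp_add, ← Complex.exp_add]
  congr 1
  push_cast
  ring

lemma conj_phi (j N : ℕ) (t : ℤ → ℤ → ℤ → ℂ) (a b c : ℤ) :
    (starRingEnd ℂ) (fourierPresentation j N t a b c)
      = ∑ m1 ∈ Finset.Icc (-(j : ℤ)) (j : ℤ), ∑ m2 ∈ Finset.Icc (-(j : ℤ)) (j : ℤ),
          ∑ m3 ∈ Finset.Icc (-(j : ℤ)) (j : ℤ),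
            (starRingEnd ℂ) (t m1 m2 m3) * (-1 : ℂ) ^ (3 * (j : ℤ) - |m1| - |m2| - |m3|) *
              Complex.I ^ (3 * (j : ℤ) - |m1| - |m2| - |m3|) *
              (fpE N a m1 * fpE N b m2 * fpE N c m3) := by
  rw [fourierPresentation]
  rw [map_sum]
  refine Finset.sum_congr rfl fun m1 _ => ?_
  rw [map_sum]
  refine Finset.sum_congr rfl fun m2 _ => ?_
  rw [map_sum]
  refine Finset.sum_congr rfl fun m3 _ => ?_
  rw [map_mul, map_mul, map_zpow₀, ← Complex.exp_conj]
  have harg : (starRingEnd ℂ) (-(2 * (Real.pi : ℂ) * Complex.I / (N : ℂ)) *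
      ((a : ℂ) * (m1 : ℂ) + (b : ℂ) * (m2 : ℂ) + (c : ℂ) * (m3 : ℂ)))
      = (2 * (Real.pi : ℂ) * Complex.I / (N : ℂ)) *
          ((a : ℂ) * (m1 : ℂ) + (b : ℂ) * (m2 : ℂ) + (c : ℂ) * (m3 : ℂ)) := by
    simp only [map_mul, map_neg, map_div₀, map_add, Complex.conj_I, Complex.conj_ofReal,
      map_intCast, map_natCast, map_ofNat]
    ring
  rw [harg]
  have hI : (starRingEnd ℂ) Complex.I ^ (3 * (j : ℤ) - |m1| - |m2| - |m3|)
      = (-1 : ℂ) ^ (3 * (j : ℤ) - |m1| - |m2| - |m3|) *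
        Complex.I ^ (3 * (j : ℤ) - |m1| - |m2| - |m3|) := by
    rw [Complex.conj_I, show (-Complex.I) = (-1) * Complex.I by ring, mul_zpow]
  rw [hI]
  have hexp : Complex.exp ((2 * (Real.pi : ℂ) * Complex.I / (N : ℂ)) *
      ((a : ℂ) * (m1 : ℂ) + (b : ℂ) * (m2 : ℂ) + (c : ℂ) * (m3 : ℂ)))
      = fpE N a m1 * fpE N b m2 * fpE N c m3 := by
    rw [fpE, fpE, fpE, ← Complex.exp_add, ← Complex.exp_add]
    congr 1
    ring
  rw [hexp]
  ring

lemma conj_sub_phi (j N : ℕ) (t : ℤ → ℤ → ℤ → ℂ) (a b c : ℤ) :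
    (starRingEnd ℂ) (fourierPresentation j N t a b c) - fourierPresentation j N t a b c
      = ∑ m1 ∈ Finset.Icc (-(j : ℤ)) (j : ℤ), ∑ m2 ∈ Finset.Icc (-(j : ℤ)) (j : ℤ),
          ∑ m3 ∈ Finset.Icc (-(j : ℤ)) (j : ℤ),
            fpG j t m1 m2 m3 * (fpE N a m1 * fpE N b m2 * fpE N c m3) := by
  rw [conj_phi, phi_reindex, ← Finset.sum_sub_distrib]
  refine Finset.sum_congr rfl fun m1 _ => ?_
  rw [← Finset.sum_sub_distrib]
  refine Finset.sum_congr rfl fun m2 _ => ?_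
  rw [← Finset.sum_sub_distrib]
  refine Finset.sum_congr rfl fun m3 _ => ?_
  rw [fpG]
  ring

lemma neg_one_zpow_sq (K : ℤ) : ((-1 : ℂ)) ^ K * ((-1 : ℂ)) ^ K = 1 := by
  rw [← zpow_add₀ (by norm_num : (-1 : ℂ) ≠ 0), ← two_mul, zpow_mul]
  norm_num

/-- The reality condition: the discrete Fourier presentation `φ` of `t` is real for all
integer indices iff `conj(t(m)) = (-1)^{3j-|m₁|-|m₂|-|m₃|} t(-m)` on `M³`. -/
theorem reality_condition (j N : ℕ) (hN : N = 2 * j + 1) (t : ℤ → ℤ → ℤ → ℂ)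
    (φ : ℤ → ℤ → ℤ → ℂ) (hφ : φ = fourierPresentation j N t) :
    (∀ a b c : ℤ, (φ a b c).im = 0) ↔
      (∀ m1 ∈ Finset.Icc (-(j : ℤ)) (j : ℤ), ∀ m2 ∈ Finset.Icc (-(j : ℤ)) (j : ℤ),
        ∀ m3 ∈ Finset.Icc (-(j : ℤ)) (j : ℤ),
          (starRingEnd ℂ) (t m1 m2 m3)
            = (-1 : ℂ) ^ (3 * (j : ℤ) - |m1| - |m2| - |m3|) * t (-m1) (-m2) (-m3)) := by
  subst hφ
  constructor
  · intro h m1 hm1 m2 hm2 m3 hm3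
    have H0 : ∀ a b c : ℤ,
        ∑ n1 ∈ Finset.Icc (-(j : ℤ)) (j : ℤ), ∑ n2 ∈ Finset.Icc (-(j : ℤ)) (j : ℤ),
          ∑ n3 ∈ Finset.Icc (-(j : ℤ)) (j : ℤ),
            fpG j t n1 n2 n3 * (fpE N a n1 * fpE N b n2 * fpE N c n3) = 0 := by
      intro a b c
      rw [← conj_sub_phi j N t a b c, Complex.conj_eq_iff_im.mpr (h a b c), sub_self]
    have H1 : ∀ b c : ℤ, ∀ n1 ∈ Finset.Icc (-(j : ℤ)) (j : ℤ),
        (∑ n2 ∈ Finset.Icc (-(j : ℤ)) (j : ℤ), ∑ n3 ∈ Finset.Icc (-(j : ℤ)) (j : ℤ),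
          fpG j t n1 n2 n3 * (fpE N b n2 * fpE N c n3)) = 0 := by
      intro b c
      refine fpInv j N hN _ fun a => ?_
      rw [← H0 a b c]
      refine Finset.sum_congr rfl fun n1 _ => ?_
      rw [Finset.sum_mul]
      refine Finset.sum_congr rfl fun n2 _ => ?_
      rw [Finset.sum_mul]
      refine Finset.sum_congr rfl fun n3 _ => ?_
      ring
    have H2 : ∀ c : ℤ, ∀ n2 ∈ Finset.Icc (-(j : ℤ)) (j : ℤ),
        (∑ n3 ∈ Finset.Icc (-(j : ℤ)) (j : ℤ), fpG j t m1 n2 n3 * fpE N c n3) = 0 := by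
      intro c
      refine fpInv j N hN _ fun b => ?_
      rw [← H1 b c m1 hm1]
      refine Finset.sum_congr rfl fun n2 _ => ?_
      rw [Finset.sum_mul]
      refine Finset.sum_congr rfl fun n3 _ => ?_
      ring
    have H3 : fpG j t m1 m2 m3 = 0 :=
      fpInv j N hN (fun n3 => fpG j t m1 m2 n3) (fun c => H2 c m2 hm2) m3 hm3
    rw [fpG, mul_eq_zero] at H3
    have hI : Complex.I ^ (3 * (j : ℤ) - |m1| - |m2| - |m3|) ≠ 0 :=
      zpow_ne_zero _ Complex.I_ne_zero
    have h4 := sub_eq_zero.mp (H3.resolve_right hI)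
    linear_combination ((-1 : ℂ) ^ (3 * (j : ℤ) - |m1| - |m2| - |m3|)) * h4
      - (starRingEnd ℂ) (t m1 m2 m3) * neg_one_zpow_sq (3 * (j : ℤ) - |m1| - |m2| - |m3|)
  · intro h a b c
    rw [← Complex.conj_eq_iff_im, ← sub_eq_zero, conj_sub_phi j N t a b c]
    refine Finset.sum_eq_zero fun m1 hm1 => Finset.sum_eq_zero fun m2 hm2 =>
      Finset.sum_eq_zero fun m3 hm3 => ?_
    have hg : fpG j t m1 m2 m3 = 0 := by
      rw [fpG, h m1 hm1 m2 hm2 m3 hm3]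
      have := neg_one_zpow_sq (3 * (j : ℤ) - |m1| - |m2| - |m3|)
      linear_combination (t (-m1) (-m2) (-m3) *
        Complex.I ^ (3 * (j : ℤ) - |m1| - |m2| - |m3|)) * this
    rw [hg, zero_mul]
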